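/- Let P be a unital Poisson algebra with a generalized derivation E satisfying E(ab) = E(a)b + aE(b) - abE(1) and E({p,q}) = {E(p),q} + {p,E(q)} + {p,q}E(1), and let (A,D) be a commutative associative algebra with derivation D. Then the bracket on P ⊗ A defined by ⟨p⊗a, q⊗b⟩ = {p,q}⊗ab + E(p)q ⊗ aD(b) - E(q)p ⊗ D(a)b satisfies the generalized Leibniz identity ⟨xy, z⟩ = x⟨y,z⟩ + y⟨x,z⟩ - xy⟨1,z⟩ for all x, y, z ∈ P ⊗ A. -/

import Mathlib

open TensorProduct

/-- let `P` be a unital Poisson algebra with a generalized derivation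
`E` satisfying `E(ab) = E(a)b + aE(b) - abE(1)` and
`E({p,q}) = {E(p),q} + {p,E(q)} + {p,q}E(1)`, and let `(A,D)` be a commutative
associative algebra with a derivation `D`.  Then the bracket on `P ⊗ A` given on pure
tensors by `⟨p⊗a, q⊗b⟩ = {p,q}⊗ab + E(p)q ⊗ aD(b) - E(q)p ⊗ D(a)b` satisfies the
generalized Leibniz identity `⟨xy,z⟩ = x⟨y,z⟩ + y⟨x,z⟩ - xy⟨1,z⟩`. -/
theorem tensor_bracket_leibniz {F : Type} [Field F] (hchar : (2 : F) ≠ 0)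
    {P : Type} [CommRing P] [Algebra F P]
    (pbr : P →ₗ[F] P →ₗ[F] P)
    (hskew : ∀ p q : P, pbr p q = - pbr q p)
    (hleib : ∀ p q r : P, pbr p (q * r) = pbr p q * r + q * pbr p r)
    (hjac : ∀ p q r : P, pbr p (pbr q r) = pbr (pbr p q) r + pbr q (pbr p r))
    (E : P →ₗ[F] P)
    (hE1 : ∀ a b : P, E (a * b) = E a * b + a * E b - a * b * E 1)
    (hE2 : ∀ p q : P, E (pbr p q) = pbr (E p) q + pbr p (E q) + pbr p q * E 1)
    {A : Type} [CommRing A] [Algebra F A]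
    (D : Derivation F A A)
    (br : (P ⊗[F] A) →ₗ[F] (P ⊗[F] A) →ₗ[F] (P ⊗[F] A))
    (hbr : ∀ (p q : P) (a b : A),
      br (p ⊗ₜ a) (q ⊗ₜ b)
        = (pbr p q) ⊗ₜ (a * b) + (E p * q) ⊗ₜ (a * D b) - (E q * p) ⊗ₜ (D a * b)) :
    ∀ x y z : P ⊗[F] A,
      br (x * y) z = x * br y z + y * br x z - (x * y) * br 1 z := by
  have hpbr1 : ∀ r : P, pbr r (1 : P) = 0 := by
    intro r
    have h := hleib r 1 1
    rw [mul_one, one_mul, mul_one] at h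
    exact (left_eq_add.mp h)
  have hpbr1' : ∀ r : P, pbr (1 : P) r = 0 := by
    intro r; rw [hskew, hpbr1, neg_zero]
  -- key pure-tensor case
  have key : ∀ (p q r : P) (a b c : A),
      br ((p ⊗ₜ[F] a) * (q ⊗ₜ[F] b)) (r ⊗ₜ[F] c)
        = (p ⊗ₜ[F] a) * br (q ⊗ₜ[F] b) (r ⊗ₜ[F] c)
          + (q ⊗ₜ[F] b) * br (p ⊗ₜ[F] a) (r ⊗ₜ[F] c)
          - ((p ⊗ₜ[F] a) * (q ⊗ₜ[F] b)) * br 1 (r ⊗ₜ[F] c) := by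
    intro p q r a b c
    have hone : (1 : P ⊗[F] A) = (1 : P) ⊗ₜ[F] (1 : A) := rfl
    rw [Algebra.TensorProduct.tmul_mul_tmul, hone, hbr, hbr, hbr, hbr]
    have hpq : pbr (p * q) r = p * pbr q r + q * pbr p r := by
      rw [hskew (p * q) r, hleib r p q]
      rw [hskew r p, hskew r q]; ring
    rw [hpq, hE1, D.leibniz, Derivation.map_one_eq_zero D, hpbr1' r]
    simp only [one_mul, mul_one, zero_mul, mul_zero, TensorProduct.zero_tmul,
      TensorProduct.tmul_zero, zero_add, add_zero, sub_zero, zero_sub, smul_eq_mul]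
    simp only [TensorProduct.add_tmul, TensorProduct.sub_tmul,
      TensorProduct.tmul_add, TensorProduct.tmul_sub,
      mul_add, add_mul, mul_sub, sub_mul,
      Algebra.TensorProduct.tmul_mul_tmul]
    ring_nf
  intro x y z
  induction z using TensorProduct.induction_on with
  | zero => simp
  | add z₁ z₂ h₁ h₂ =>
      simp only [map_add, mul_add] at *
      rw [h₁, h₂]; ring
  | tmul r c =>
    induction x using TensorProduct.induction_on with
    | zero => simp
    | add x₁ x₂ h₁ h₂ =>
        simp only [add_mul, map_add, LinearMap.add_apply] at *
        rw [h₁, h₂]; ring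
    | tmul p a =>
      induction y using TensorProduct.induction_on with
      | zero => simp
      | add y₁ y₂ h₁ h₂ =>
          simp only [mul_add, map_add, LinearMap.add_apply] at *
          rw [h₁, h₂]; ring
      | tmul q b => exact key p q r a b c
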